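/- Let f : ℝ → ℝ be continuously differentiable on [0,∞), strictly concave, bounded above, with f(0) = 0, let r > 0 with f'(0) > r, let x_σ > 0 with f'(x_σ) = r and u_σ = f(x_σ)/x_σ − r, and for 0 ≤ u ≤ u_σ let x*(u) > 0 be the unique positive solution of f(x) = (r+u)x. Then x*(u) ≥ x_σ with equality only at u = u_σ, and the equilibrium productivity u ↦ u·x*(u) is strictly increasing on [0, u_σ]; in particular on an admissible control range [0, ū] with ū ≤ u_σ the optimal constant productivity is attained at u = ū. -/

import Mathlib

open Set

private lemma mvt_aux (f : ℝ → ℝ)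
    (hdiff : ∀ x ∈ Set.Ici (0 : ℝ), DifferentiableAt ℝ f x)
    {a b : ℝ} (ha : 0 ≤ a) (hab : a < b) :
    ∃ c ∈ Set.Ioo a b, deriv f c = (f b - f a) / (b - a) := by
  apply exists_deriv_eq_slope f hab
  · intro x hx
    exact (hdiff x (Set.mem_Ici.mpr (le_trans ha hx.1))).continuousAt.continuousWithinAt
  · intro x hx
    exact (hdiff x (Set.mem_Ici.mpr (le_trans ha hx.1.le))).differentiableWithinAt

/-- the slope f(x)/x is strictly decreasing on (0,∞). -/
private lemma slope_anti (f : ℝ → ℝ)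
    (hdiff : ∀ x ∈ Set.Ici (0 : ℝ), DifferentiableAt ℝ f x)
    (hconc : StrictAntiOn (deriv f) (Set.Ici (0 : ℝ)))
    (hf0 : f 0 = 0)
    {a b : ℝ} (ha : 0 < a) (hab : a < b) : f b / b < f a / a := by
  obtain ⟨c₁, hc₁, hc₁'⟩ := mvt_aux f hdiff le_rfl ha
  obtain ⟨c₂, hc₂, hc₂'⟩ := mvt_aux f hdiff ha.le hab
  have h1 : f a = deriv f c₁ * a := by
    rw [hc₁', hf0, sub_zero, sub_zero, div_mul_cancel₀ _ ha.ne']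
  have h2 : f b - f a = deriv f c₂ * (b - a) := by
    rw [hc₂', div_mul_cancel₀ _ (sub_ne_zero.mpr hab.ne')]
  have hlt : deriv f c₂ < deriv f c₁ :=
    hconc (le_of_lt hc₁.1) (le_trans ha.le hc₂.1.le) (hc₁.2.trans hc₂.1)
  have hb : (0:ℝ) < b := ha.trans hab
  rw [div_lt_div_iff₀ hb ha]
  nlinarith [mul_lt_mul_of_pos_right hlt (mul_pos ha (sub_pos.mpr hab))]

theorem equilibrium_productivity_increasing
    (f : ℝ → ℝ) (r xσ uσ : ℝ) (xs : ℝ → ℝ)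
    (hdiff : ∀ x ∈ Set.Ici (0 : ℝ), DifferentiableAt ℝ f x)
    (hderiv_cont : ContinuousOn (deriv f) (Set.Ici (0 : ℝ)))
    (hconc : StrictAntiOn (deriv f) (Set.Ici (0 : ℝ)))
    (hbdd : BddAbove (f '' Set.Ici (0 : ℝ)))
    (hf0 : f 0 = 0)
    (hr : 0 < r)
    (hr' : r < deriv f 0)
    (hxσ : 0 < xσ)
    (hxσr : deriv f xσ = r)
    (huσ : uσ = f xσ / xσ - r)
    (hxs : ∀ u ∈ Set.Icc (0 : ℝ) uσ, 0 < xs u ∧ f (xs u) = (r + u) * xs u) :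
    (∀ u ∈ Set.Icc (0 : ℝ) uσ, xσ ≤ xs u ∧ (xs u = xσ → u = uσ)) ∧
    StrictMonoOn (fun u => u * xs u) (Set.Icc (0 : ℝ) uσ) ∧
    (∀ ubar : ℝ, 0 ≤ ubar → ubar ≤ uσ →
      ∀ u ∈ Set.Icc (0 : ℝ) ubar, u * xs u ≤ ubar * xs ubar) := by
  have hgσ : f xσ / xσ = r + uσ := by rw [huσ]; ring
  -- slope of xs u equals r + u
  have hg : ∀ u ∈ Set.Icc (0 : ℝ) uσ, f (xs u) / xs u = r + u := by
    intro u hu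
    obtain ⟨hpos, heq⟩ := hxs u hu
    rw [heq, mul_div_cancel_right₀ _ (ne_of_gt hpos)]
  -- part 1
  have key1 : ∀ u ∈ Set.Icc (0 : ℝ) uσ, xσ ≤ xs u := by
    intro u hu
    by_contra h
    push_neg at h
    have hpos := (hxs u hu).1
    have := slope_anti f hdiff hconc hf0 hpos h
    rw [hg u hu, hgσ] at this
    linarith [hu.2]
  have key1' : ∀ u ∈ Set.Icc (0 : ℝ) uσ, xs u = xσ → u = uσ := by
    intro u hu he
    have := hg u hu
    rw [he, hgσ] at this
    linarith
  -- f x - r x strictly decreasing on [xσ, ∞)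
  have hanti : ∀ a b : ℝ, xσ ≤ a → a < b → f b - r * b < f a - r * a := by
    intro a b ha hab
    obtain ⟨c, hc, hc'⟩ := mvt_aux f hdiff (le_trans hxσ.le ha) hab
    have hcσ : xσ < c := lt_of_le_of_lt ha hc.1
    have hdc : deriv f c < r := by
      rw [← hxσr]
      exact hconc hxσ.le (le_trans hxσ.le hcσ.le) hcσ
    have : f b - f a = deriv f c * (b - a) := by
      rw [hc', div_mul_cancel₀ _ (sub_ne_zero.mpr hab.ne')]
    nlinarith
  -- strict monotonicity
  have key2 : StrictMonoOn (fun u => u * xs u) (Set.Icc (0 : ℝ) uσ) := by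
    intro u hu v hv huv
    have hpu := (hxs u hu).1
    have hpv := (hxs v hv).1
    have hgu := hg u hu
    have hgv := hg v hv
    have hxvu : xs v < xs u := by
      rcases lt_trichotomy (xs u) (xs v) with h | h | h
      · have := slope_anti f hdiff hconc hf0 hpu h
        rw [hgu, hgv] at this; linarith
      · rw [h, hgv] at hgu; linarith
      · exact h
    have := hanti (xs v) (xs u) (key1 v hv) hxvu
    have heu := (hxs u hu).2
    have hev := (hxs v hv).2
    simp only
    nlinarith
  refine ⟨fun u hu => ⟨key1 u hu, key1' u hu⟩, key2, ?_⟩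
  intro ubar h0 h1 u hu
  have hub : ubar ∈ Set.Icc (0:ℝ) uσ := ⟨h0, h1⟩
  have hu' : u ∈ Set.Icc (0:ℝ) uσ := ⟨hu.1, le_trans hu.2 h1⟩
  rcases eq_or_lt_of_le hu.2 with h | h
  · rw [h]
  · exact (key2 hu' hub h).le
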